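/- For any finite nonempty alphabet Σ, the class 𝓛_{Σ,h} of morphic array pattern languages is closed under intersection: for all array patterns α and β there exists an array pattern γ such that L_{Σ,h}(γ) = L_{Σ,h}(α) ∩ L_{Σ,h}(β). -/

import Mathlib

/-- A nonempty rectangular two-dimensional word (array) over `σ`. -/
structure Arr (σ : Type) : Type where
  rows : ℕ
  cols : ℕ
  rows_pos : 0 < rows
  cols_pos : 0 < cols
  entry : Fin rows → Fin cols → σ

namespace Arr

variable {σ γ : Type}

/-- Column concatenation: place `V` to the right of `U`; `none` if heights differ. -/
def colCat (U V : Arr σ) : Option (Arr σ) :=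
  if h : U.rows = V.rows then
    some { rows := U.rows
           cols := U.cols + V.cols
           rows_pos := U.rows_pos
           cols_pos := by have := U.cols_pos; omega
           entry := fun i j =>
             if hj : (j : ℕ) < U.cols then U.entry i ⟨j, hj⟩
             else V.entry (Fin.cast h i) ⟨(j : ℕ) - U.cols, by have := j.isLt; omega⟩ }
  else none

/-- Row concatenation: place `V` below `U`; `none` if widths differ. -/
def rowCat (U V : Arr σ) : Option (Arr σ) :=
  if h : U.cols = V.cols then
    some { rows := U.rows + V.rows
           cols := U.cols
           rows_pos := by have := U.rows_pos; omega
           cols_pos := U.cols_pos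
           entry := fun i j =>
             if hi : (i : ℕ) < U.rows then U.entry ⟨i, hi⟩ j
             else V.entry ⟨(i : ℕ) - U.rows, by have := i.isLt; omega⟩ (Fin.cast h j) }
  else none

/-- A two-dimensional morphism: compatible with both concatenations,
with "both sides undefined" counting as equal. -/
def IsMorphism (h : Arr σ → Arr γ) : Prop :=
  (∀ V W : Arr σ, Option.map h (colCat V W) = colCat (h V) (h W)) ∧
  (∀ V W : Arr σ, Option.map h (rowCat V W) = rowCat (h V) (h W))

/-- Concatenate a nonempty list of (possibly undefined) arrays with the
given partial concatenation operation; `none` on the empty list. -/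
def catListO (op : Arr σ → Arr σ → Option (Arr σ)) : List (Option (Arr σ)) → Option (Arr σ)
  | [] => none
  | [a] => a
  | a :: b :: rest => a.bind fun x => (catListO op (b :: rest)).bind fun y => op x y

/-- `g_{⦶,⊖}`: substitute and assemble, first column-concatenating each row,
then row-concatenating the rows. -/
def subCR {X : Type} (g : X → Arr σ) (α : Arr X) : Option (Arr σ) :=
  catListO rowCat (List.ofFn fun i : Fin α.rows =>
    catListO colCat (List.ofFn fun j : Fin α.cols => some (g (α.entry i j))))

/-- `g_{⊖,⦶}`: substitute and assemble, first row-concatenating each column,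
then column-concatenating the columns. -/
def subRC {X : Type} (g : X → Arr σ) (α : Arr X) : Option (Arr σ) :=
  catListO colCat (List.ofFn fun j : Fin α.cols =>
    catListO rowCat (List.ofFn fun i : Fin α.rows => some (g (α.entry i j))))

/-- A substitution is uniform if all images have the same dimensions. -/
def Uniform {X : Type} (g : X → Arr σ) : Prop :=
  ∃ m n : ℕ, ∀ x : X, (g x).rows = m ∧ (g x).cols = n

end Arr

open Arr

/-- The five modes of array pattern languages. -/
inductive Mode | h | p | r | c | rc
deriving DecidableEq

/-- The array pattern language of an array pattern (an array over the
variables `ℕ`) in each mode. -/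
def langOf (σ : Type) : Mode → Arr ℕ → Set (Arr σ)
  | Mode.h, α => {W | ∃ g : Arr ℕ → Arr σ, IsMorphism g ∧ g α = W}
  | Mode.p, α => {W | ∃ s : ℕ → Arr σ, subCR s α = some W ∧ subRC s α = some W}
  | Mode.r, α => {W | ∃ s : ℕ → Arr σ, subCR s α = some W}
  | Mode.c, α => {W | ∃ s : ℕ → Arr σ, subRC s α = some W}
  | Mode.rc, α =>
      {W | ∃ s : ℕ → Arr σ, subCR s α = some W} ∪ {W | ∃ s : ℕ → Arr σ, subRC s α = some W}

section Aux
open Arr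

variable {σ : Type}

theorem arr_ext {A B : Arr σ} (hr : A.rows = B.rows) (hc : A.cols = B.cols)
    (he : ∀ (i j : ℕ) (hi : i < A.rows) (hj : j < A.cols),
      A.entry ⟨i, hi⟩ ⟨j, hj⟩ = B.entry ⟨i, hr ▸ hi⟩ ⟨j, hc ▸ hj⟩) : A = B := by
  obtain ⟨r, c, hr0, hc0, e⟩ := A
  obtain ⟨r', c', hr0', hc0', e'⟩ := B
  simp only at hr hc
  subst hr; subst hc
  simp only [Arr.mk.injEq, heq_eq_eq, true_and]
  funext i j
  have := he i j i.isLt j.isLt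
  simpa using this

theorem divlt {i m r : ℕ} (hm : 0 < m) (hi : i < r * m) : i / m < r :=
  (Nat.div_lt_iff_lt_mul hm).2 hi

theorem blkdiv {m q r : ℕ} (hm : 0 < m) (hr : r < m) : (q * m + r) / m = q := by
  rw [mul_comm, Nat.mul_add_div hm, Nat.div_eq_of_lt hr, add_zero]

theorem blkmod {m q r : ℕ} (hr : r < m) : (q * m + r) % m = r := by
  rw [mul_comm, Nat.mul_add_mod, Nat.mod_eq_of_lt hr]

/-- Uniform block assembly: replace each entry `x` of `α` by the `m × n` block `f x`. -/
def asm (m n : ℕ) (hm : 0 < m) (hn : 0 < n) (f : ℕ → Fin m → Fin n → σ)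
    (α : Arr ℕ) : Arr σ where
  rows := α.rows * m
  cols := α.cols * n
  rows_pos := Nat.mul_pos α.rows_pos hm
  cols_pos := Nat.mul_pos α.cols_pos hn
  entry i j := f (α.entry ⟨(i : ℕ) / m, divlt hm i.isLt⟩ ⟨(j : ℕ) / n, divlt hn j.isLt⟩)
      ⟨(i : ℕ) % m, Nat.mod_lt _ hm⟩ ⟨(j : ℕ) % n, Nat.mod_lt _ hn⟩

@[simp] theorem asm_rows (m n hm hn) (f : ℕ → Fin m → Fin n → σ) (α : Arr ℕ) :
    (asm m n hm hn f α).rows = α.rows * m := rfl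

@[simp] theorem asm_cols (m n hm hn) (f : ℕ → Fin m → Fin n → σ) (α : Arr ℕ) :
    (asm m n hm hn f α).cols = α.cols * n := rfl

theorem asm_entry (m n hm hn) (f : ℕ → Fin m → Fin n → σ) (α : Arr ℕ)
    (i j : ℕ) (hi : i < α.rows * m) (hj : j < α.cols * n) :
    (asm m n hm hn f α).entry ⟨i, hi⟩ ⟨j, hj⟩ =
      f (α.entry ⟨i / m, divlt hm hi⟩ ⟨j / n, divlt hn hj⟩)
        ⟨i % m, Nat.mod_lt _ hm⟩ ⟨j % n, Nat.mod_lt _ hn⟩ := rfl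

theorem asm_colCat (m n hm hn) (f : ℕ → Fin m → Fin n → σ) (V W : Arr ℕ) :
    Option.map (asm m n hm hn f) (colCat V W)
      = colCat (asm m n hm hn f V) (asm m n hm hn f W) := by
  by_cases h : V.rows = W.rows
  · rw [colCat, dif_pos h, colCat, dif_pos (show (asm m n hm hn f V).rows = (asm m n hm hn f W).rows by simp [h])]
    rw [Option.map_some]
    congr 1
    apply arr_ext (by simp) (by simp [add_mul])
    intro i j hi hj
    simp only [asm_cols, asm_rows] at hj hi ⊢
    erw [asm_entry]; dsimp only
    by_cases hj2 : j < V.cols * n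
    · have hj3 : j / n < V.cols := divlt hn hj2
      erw [dif_pos hj3, dif_pos hj2, asm_entry]
    · have hj3 : ¬ j / n < V.cols := not_lt.2 ((Nat.le_div_iff_mul_le hn).2 (not_lt.1 hj2))
      erw [dif_neg hj3, dif_neg hj2]; simp only [Fin.cast_mk]; erw [asm_entry]
      obtain ⟨r, rfl⟩ : ∃ r, j = V.cols * n + r := ⟨j - V.cols * n, by omega⟩
      have e1 : V.cols * n + r - V.cols * n = r := by omega
      have e2 : (V.cols * n + r) / n = V.cols + r / n := by
        rw [mul_comm, Nat.mul_add_div hn]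
      have e3 : (V.cols * n + r) % n = r % n := by
        rw [mul_comm, Nat.mul_add_mod]
      simp only [e1, e2, e3, Nat.add_sub_cancel_left, Fin.cast_mk]
  · rw [colCat, dif_neg h, colCat, dif_neg]
    · rfl
    · simp only [asm_rows]
      exact fun hcon => h (Nat.eq_of_mul_eq_mul_right hm hcon)

theorem asm_rowCat (m n hm hn) (f : ℕ → Fin m → Fin n → σ) (V W : Arr ℕ) :
    Option.map (asm m n hm hn f) (rowCat V W)
      = rowCat (asm m n hm hn f V) (asm m n hm hn f W) := by
  by_cases h : V.cols = W.cols
  · rw [rowCat, dif_pos h, rowCat, dif_pos (show (asm m n hm hn f V).cols = (asm m n hm hn f W).cols by simp [h])]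
    rw [Option.map_some]
    congr 1
    apply arr_ext (by simp [add_mul]) (by simp)
    intro i j hi hj
    simp only [asm_cols, asm_rows] at hj hi ⊢
    erw [asm_entry]; dsimp only
    by_cases hi2 : i < V.rows * m
    · have hi3 : i / m < V.rows := divlt hm hi2
      erw [dif_pos hi3, dif_pos hi2, asm_entry]
    · have hi3 : ¬ i / m < V.rows := not_lt.2 ((Nat.le_div_iff_mul_le hm).2 (not_lt.1 hi2))
      erw [dif_neg hi3, dif_neg hi2]; simp only [Fin.cast_mk]; erw [asm_entry]
      obtain ⟨r, rfl⟩ : ∃ r, i = V.rows * m + r := ⟨i - V.rows * m, by omega⟩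
      have e1 : V.rows * m + r - V.rows * m = r := by omega
      have e2 : (V.rows * m + r) / m = V.rows + r / m := by
        rw [mul_comm, Nat.mul_add_div hm]
      have e3 : (V.rows * m + r) % m = r % m := by
        rw [mul_comm, Nat.mul_add_mod]
      simp only [e1, e2, e3, Nat.add_sub_cancel_left, Fin.cast_mk]
  · rw [rowCat, dif_neg h, rowCat, dif_neg]
    · rfl
    · simp only [asm_cols]
      exact fun hcon => h (Nat.eq_of_mul_eq_mul_right hn hcon)

theorem asm_isMorphism (m n hm hn) (f : ℕ → Fin m → Fin n → σ) :
    IsMorphism (asm m n hm hn f) :=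
  ⟨asm_colCat m n hm hn f, asm_rowCat m n hm hn f⟩

/-- The `1 × 1` array with entry `x`. -/
def cell (x : ℕ) : Arr ℕ := ⟨1, 1, one_pos, one_pos, fun _ _ => x⟩

/-- Top `r` rows of an array. -/
def topRows (V : Arr ℕ) (r : ℕ) (h1 : 0 < r) (h2 : r < V.rows) : Arr ℕ :=
  ⟨r, V.cols, h1, V.cols_pos, fun i j => V.entry ⟨i, lt_trans i.isLt h2⟩ j⟩

/-- Rows of an array below the top `r` ones. -/
def botRows (V : Arr ℕ) (r : ℕ) (h2 : r < V.rows) : Arr ℕ :=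
  ⟨V.rows - r, V.cols, by omega, V.cols_pos,
    fun i j => V.entry ⟨r + i, by have := i.isLt; omega⟩ j⟩

/-- Left `c` columns of an array. -/
def leftCols (V : Arr ℕ) (c : ℕ) (h1 : 0 < c) (h2 : c < V.cols) : Arr ℕ :=
  ⟨V.rows, c, V.rows_pos, h1, fun i j => V.entry i ⟨j, lt_trans j.isLt h2⟩⟩

/-- Columns of an array to the right of the left `c` ones. -/
def rightCols (V : Arr ℕ) (c : ℕ) (h2 : c < V.cols) : Arr ℕ :=
  ⟨V.rows, V.cols - c, V.rows_pos, by omega,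
    fun i j => V.entry i ⟨c + j, by have := j.isLt; omega⟩⟩

theorem rowCat_split (V : Arr ℕ) (r : ℕ) (h1 : 0 < r) (h2 : r < V.rows) :
    rowCat (topRows V r h1 h2) (botRows V r h2) = some V := by
  have hcc : (topRows V r h1 h2).cols = (botRows V r h2).cols := rfl
  rw [rowCat, dif_pos hcc, Option.some.injEq]
  refine arr_ext ?_ ?_ ?_
  · show r + (V.rows - r) = V.rows
    omega
  · rfl
  intro i j hi hj
  dsimp only [topRows, botRows]
  by_cases hir : i < r
  · erw [dif_pos hir]
  · erw [dif_neg hir]; congr 1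
    exact Fin.ext (by simp; omega)

theorem colCat_split (V : Arr ℕ) (c : ℕ) (h1 : 0 < c) (h2 : c < V.cols) :
    colCat (leftCols V c h1 h2) (rightCols V c h2) = some V := by
  have hcc : (leftCols V c h1 h2).rows = (rightCols V c h2).rows := rfl
  rw [colCat, dif_pos hcc, Option.some.injEq]
  refine arr_ext ?_ ?_ ?_
  · rfl
  · show c + (V.cols - c) = V.cols
    omega
  intro i j hi hj
  dsimp only [leftCols, rightCols]
  by_cases hjc : j < c
  · erw [dif_pos hjc]
  · erw [dif_neg hjc]; congr 1
    exact Fin.ext (by simp; omega)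

theorem morph_dims (g : Arr ℕ → Arr σ) (hg : IsMorphism g) (x y : ℕ) :
    (g (cell x)).rows = (g (cell y)).rows ∧ (g (cell x)).cols = (g (cell y)).cols := by
  constructor
  · have hxy : (cell x).rows = (cell y).rows := rfl
    have h := hg.1 (cell x) (cell y)
    rw [colCat, dif_pos hxy, Option.map_some] at h
    by_contra hne
    rw [colCat, dif_neg hne] at h
    cases h
  · have hxy : (cell x).cols = (cell y).cols := rfl
    have h := hg.2 (cell x) (cell y)
    rw [rowCat, dif_pos hxy, Option.map_some] at h
    by_contra hne
    rw [rowCat, dif_neg hne] at h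
    cases h

theorem morph_eq_asm (g : Arr ℕ → Arr σ) (hg : IsMorphism g) :
    ∃ (m n : ℕ) (hm : 0 < m) (hn : 0 < n) (f : ℕ → Fin m → Fin n → σ),
      ∀ V, g V = asm m n hm hn f V := by
  obtain ⟨m, n, hdim⟩ : ∃ m n, ∀ x : ℕ, (g (cell x)).rows = m ∧ (g (cell x)).cols = n :=
    ⟨(g (cell 0)).rows, (g (cell 0)).cols, fun x => morph_dims g hg x 0⟩
  have hm : 0 < m := (hdim 0).1 ▸ (g (cell 0)).rows_pos
  have hn : 0 < n := (hdim 0).2 ▸ (g (cell 0)).cols_pos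
  refine ⟨m, n, hm, hn,
    fun x i j => (g (cell x)).entry ⟨i, by rw [(hdim x).1]; exact i.isLt⟩
      ⟨j, by rw [(hdim x).2]; exact j.isLt⟩, ?_⟩
  set f : ℕ → Fin m → Fin n → σ :=
    fun x i j => (g (cell x)).entry ⟨i, by rw [(hdim x).1]; exact i.isLt⟩
      ⟨j, by rw [(hdim x).2]; exact j.isLt⟩ with hfdef
  have hcell : ∀ x, g (cell x) = asm m n hm hn f (cell x) := by
    intro x
    apply arr_ext (by rw [asm_rows, (hdim x).1]; exact (one_mul m).symm)
      (by rw [asm_cols, (hdim x).2]; exact (one_mul n).symm)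
    intro i j hi hj
    have him : i < m := by rw [(hdim x).1] at hi; exact hi
    have hjn : j < n := by rw [(hdim x).2] at hj; exact hj
    have e1 : i % m = i := Nat.mod_eq_of_lt him
    have e2 : j % n = j := Nat.mod_eq_of_lt hjn
    erw [asm_entry]
    show _ = (g (cell x)).entry _ _
    congr 1 <;> exact Fin.ext (by simp [e1, e2])
  have main : ∀ N (V : Arr ℕ), V.rows + V.cols ≤ N → g V = asm m n hm hn f V := by
    intro N
    induction N with
    | zero => intro V h; have := V.rows_pos; have := V.cols_pos; omega
    | succ N ih =>
      intro V hV
      by_cases hr : 1 < V.rows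
      · have hsplit := rowCat_split V 1 one_pos hr
        have h1 := hg.2 (topRows V 1 one_pos hr) (botRows V 1 hr)
        rw [hsplit, Option.map_some] at h1
        have e1 : g (topRows V 1 one_pos hr) = asm m n hm hn f (topRows V 1 one_pos hr) := by
          apply ih; have := V.rows_pos; have := V.cols_pos
          simp only [topRows]; omega
        have e2 : g (botRows V 1 hr) = asm m n hm hn f (botRows V 1 hr) := by
          apply ih; have := V.cols_pos
          simp only [botRows]; omega
        rw [e1, e2] at h1
        have h2 := asm_rowCat m n hm hn f (topRows V 1 one_pos hr) (botRows V 1 hr)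
        rw [hsplit, Option.map_some] at h2
        rw [← h2] at h1
        exact Option.some.inj h1
      · by_cases hc : 1 < V.cols
        · have hsplit := colCat_split V 1 one_pos hc
          have h1 := hg.1 (leftCols V 1 one_pos hc) (rightCols V 1 hc)
          rw [hsplit, Option.map_some] at h1
          have e1 : g (leftCols V 1 one_pos hc) = asm m n hm hn f (leftCols V 1 one_pos hc) := by
            apply ih; have := V.rows_pos; have := V.cols_pos
            simp only [leftCols]; omega
          have e2 : g (rightCols V 1 hc) = asm m n hm hn f (rightCols V 1 hc) := by
            apply ih; have := V.rows_pos
            simp only [rightCols]; omega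
          rw [e1, e2] at h1
          have h2 := asm_colCat m n hm hn f (leftCols V 1 one_pos hc) (rightCols V 1 hc)
          rw [hsplit, Option.map_some] at h2
          rw [← h2] at h1
          exact Option.some.inj h1
        · have hr1 : V.rows = 1 := by have := V.rows_pos; omega
          have hc1 : V.cols = 1 := by have := V.cols_pos; omega
          have hVcell : V = cell (V.entry ⟨0, V.rows_pos⟩ ⟨0, V.cols_pos⟩) := by
            apply arr_ext (by simp [cell, hr1]) (by simp [cell, hc1])
            intro i j hi hj
            have hi0 : i = 0 := by omega
            have hj0 : j = 0 := by omega
            subst hi0; subst hj0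
            rfl
          rw [hVcell]
          exact hcell _
  exact fun V => main (V.rows + V.cols) V le_rfl

theorem mem_langh_iff (α : Arr ℕ) (W : Arr σ) :
    W ∈ langOf σ Mode.h α ↔
      ∃ (m n : ℕ) (hm : 0 < m) (hn : 0 < n) (f : ℕ → Fin m → Fin n → σ),
        asm m n hm hn f α = W := by
  constructor
  · rintro ⟨g, hg, rfl⟩
    obtain ⟨m, n, hm, hn, f, hf⟩ := morph_eq_asm g hg
    exact ⟨m, n, hm, hn, f, (hf α).symm⟩
  · rintro ⟨m, n, hm, hn, f, rfl⟩
    exact ⟨asm m n hm hn f, asm_isMorphism m n hm hn f, rfl⟩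

theorem blklt {a r b p : ℕ} (ha : a < r) (hb : b < p) : a * p + b < r * p := by
  have h1 : a * p + b < (a + 1) * p := by rw [add_one_mul]; omega
  exact lt_of_lt_of_le h1 (Nat.mul_le_mul_right p ha)

theorem tri (p k i : ℕ) : i / (p * k) = i / k / p ∧ i % (p * k) / k = i / k % p ∧
    i % (p * k) % k = i % k := by
  refine ⟨?_, ?_, ?_⟩
  · rw [Nat.div_div_eq_div_mul, mul_comm]
  · rw [mul_comm p k, Nat.mod_mul_right_div_self]
  · exact Nat.mod_mod_of_dvd i ⟨p, mul_comm p k⟩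

theorem split2 {p k x u m : ℕ} (hp : 0 < p) (hk : 0 < k) (hm : m = p * k) (hu : u < k) :
    (x * k + u) / m = x / p ∧ (x * k + u) % m = x % p * k + u := by
  subst hm
  have hx : x * k + u = (x / p) * (p * k) + (x % p * k + u) := by
    conv_lhs => rw [← Nat.div_add_mod x p]
    ring
  have hlt : x % p * k + u < p * k := blklt (Nat.mod_lt _ hp) hu
  rw [hx]
  exact ⟨blkdiv (Nat.mul_pos hp hk) hlt, blkmod hlt⟩

/-- The "block data" of a position: the pattern variable of the block the
position lies in, together with the offsets within the block. -/
def bVar (δ : Arr ℕ) (p q i j : ℕ) : ℕ × ℕ × ℕ :=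
  (if h : i / p < δ.rows ∧ j / q < δ.cols then δ.entry ⟨i / p, h.1⟩ ⟨j / q, h.2⟩ else 0,
   i % p, j % q)

theorem bVar_eval (δ : Arr ℕ) {p q P Q o1 o2 : ℕ} (hp : 0 < p) (hq : 0 < q)
    (hP : P < δ.rows) (hQ : Q < δ.cols) (h1 : o1 < p) (h2 : o2 < q) :
    bVar δ p q (P * p + o1) (Q * q + o2) = (δ.entry ⟨P, hP⟩ ⟨Q, hQ⟩, o1, o2) := by
  have d1 := blkdiv hp h1 (q := P)
  have d2 := blkdiv hq h2 (q := Q)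
  have m1 := blkmod h1 (q := P)
  have m2 := blkmod h2 (q := Q)
  unfold bVar
  rw [dif_pos (by rw [d1, d2]; exact ⟨hP, hQ⟩)]
  simp only [Prod.mk.injEq]
  refine ⟨?_, m1, m2⟩
  congr 1 <;> exact Fin.ext (by simp [d1, d2])

/-- If a pattern `γd` refines the block structure of `δ` (with `p × q` blocks),
then its language is contained in that of `δ`. -/
theorem lang_sub [Nonempty σ] (δ γd : Arr ℕ) (p q : ℕ) (hp : 0 < p) (hq : 0 < q)
    (hR : γd.rows = δ.rows * p) (hC : γd.cols = δ.cols * q)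
    (compat : ∀ (i i' : Fin γd.rows) (j j' : Fin γd.cols),
      bVar δ p q i j = bVar δ p q i' j' → γd.entry i j = γd.entry i' j') :
    langOf σ Mode.h γd ⊆ langOf σ Mode.h δ := by
  classical
  intro W hW
  rw [mem_langh_iff] at hW ⊢
  obtain ⟨k, l, hk, hl, t, rfl⟩ := hW
  refine ⟨p * k, q * l, Nat.mul_pos hp hk, Nat.mul_pos hq hl,
    fun x u v =>
      if h : ∃ PQ : Fin δ.rows × Fin δ.cols, δ.entry PQ.1 PQ.2 = x then
        t (γd.entry ⟨(Classical.choose h).1 * p + (u : ℕ) / k,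
              by rw [hR]; exact blklt (Classical.choose h).1.isLt (divlt hk u.isLt)⟩
            ⟨(Classical.choose h).2 * q + (v : ℕ) / l,
              by rw [hC]; exact blklt (Classical.choose h).2.isLt (divlt hl v.isLt)⟩)
          ⟨(u : ℕ) % k, Nat.mod_lt _ hk⟩ ⟨(v : ℕ) % l, Nat.mod_lt _ hl⟩
      else Classical.arbitrary σ, ?_⟩
  apply arr_ext (by show δ.rows * (p * k) = γd.rows * k; rw [hR]; ring)
    (by show δ.cols * (q * l) = γd.cols * l; rw [hC]; ring)
  intro i j hi hj
  erw [asm_entry, asm_entry]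
  dsimp only
  have hex : ∃ PQ : Fin δ.rows × Fin δ.cols,
      δ.entry PQ.1 PQ.2 = δ.entry ⟨i / (p * k), divlt (Nat.mul_pos hp hk) hi⟩
        ⟨j / (q * l), divlt (Nat.mul_pos hq hl) hj⟩ := ⟨(_, _), rfl⟩
  rw [dif_pos hex]
  have hspec := Classical.choose_spec hex
  -- abbreviations
  have hik : i < γd.rows * k := by rw [hR, mul_assoc]; exact hi
  have hjl : j < γd.cols * l := by rw [hC, mul_assoc]; exact hj
  -- the two γd entries agree, via compat
  have hbv : bVar δ p q ((Classical.choose hex).1 * p + i % (p * k) / k)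
        ((Classical.choose hex).2 * q + j % (q * l) / l)
      = bVar δ p q (i / k) (j / l) := by
    have hlt1 : i % (p * k) / k < p := divlt hk (Nat.mod_lt _ (Nat.mul_pos hp hk))
    have hlt2 : j % (q * l) / l < q := divlt hl (Nat.mod_lt _ (Nat.mul_pos hq hl))
    rw [bVar_eval δ hp hq (Classical.choose hex).1.isLt (Classical.choose hex).2.isLt hlt1 hlt2]
    have e1 : i / k = (i / (p * k)) * p + i / k % p := by
      rw [(tri p k i).1, Nat.div_add_mod']
    have e2 : j / l = (j / (q * l)) * q + j / l % q := by
      rw [(tri q l j).1, Nat.div_add_mod']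
    rw [show bVar δ p q (i / k) (j / l)
        = bVar δ p q ((i / (p * k)) * p + i / k % p) ((j / (q * l)) * q + j / l % q) by
      rw [← e1, ← e2]]
    rw [bVar_eval δ hp hq (divlt (Nat.mul_pos hp hk) hi) (divlt (Nat.mul_pos hq hl) hj)
      (Nat.mod_lt _ hp) (Nat.mod_lt _ hq)]
    simp only [Prod.mk.injEq]
    refine ⟨?_, (tri p k i).2.1.symm ▸ rfl, (tri q l j).2.1.symm ▸ rfl⟩
    · rw [show ((Classical.choose hex).1 : Fin δ.rows) = ⟨(Classical.choose hex).1.1,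
        (Classical.choose hex).1.isLt⟩ from rfl] at hspec
      exact hspec
  have hγ := compat ⟨_, blklt (Classical.choose hex).1.isLt (divlt hk (Nat.mod_lt _ (Nat.mul_pos hp hk))) |>.trans_eq hR.symm⟩
    ⟨i / k, divlt hk hik⟩
    ⟨_, blklt (Classical.choose hex).2.isLt (divlt hl (Nat.mod_lt _ (Nat.mul_pos hq hl))) |>.trans_eq hC.symm⟩
    ⟨j / l, divlt hl hjl⟩ hbv
  rw [hγ]
  simp only [(tri p k i).2.2, (tri q l j).2.2]

theorem key2 {m n : ℕ} (hm : 0 < m) (hn : 0 < n) (f : ℕ → Fin m → Fin n → σ) (δ : Arr ℕ)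
    (W : Arr σ) (hW : asm m n hm hn f δ = W)
    {p q k l : ℕ} (hk : 0 < k) (hl : 0 < l) (hp : 0 < p) (hq : 0 < q)
    (hmk : m = p * k) (hnl : n = q * l)
    {x1 x2 y1 y2 : ℕ} (hx1 : x1 < δ.rows * p) (hx2 : x2 < δ.cols * q)
    (hy1 : y1 < δ.rows * p) (hy2 : y2 < δ.cols * q)
    (hbv : bVar δ p q x1 x2 = bVar δ p q y1 y2)
    {u v : ℕ} (hu : u < k) (hv : v < l)
    (Hx1 : x1 * k + u < W.rows) (Hx2 : x2 * l + v < W.cols)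
    (Hy1 : y1 * k + u < W.rows) (Hy2 : y2 * l + v < W.cols) :
    W.entry ⟨x1 * k + u, Hx1⟩ ⟨x2 * l + v, Hx2⟩
      = W.entry ⟨y1 * k + u, Hy1⟩ ⟨y2 * l + v, Hy2⟩ := by
  subst hW
  erw [asm_entry, asm_entry]
  have c1 : x1 / p < δ.rows ∧ x2 / q < δ.cols := ⟨divlt hp hx1, divlt hq hx2⟩
  have c2 : y1 / p < δ.rows ∧ y2 / q < δ.cols := ⟨divlt hp hy1, divlt hq hy2⟩
  unfold bVar at hbv
  rw [dif_pos c1, dif_pos c2, Prod.mk.injEq, Prod.mk.injEq] at hbv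
  obtain ⟨he, h1, h2⟩ := hbv
  have dx1 := (split2 hp hk hmk hu (x := x1)).1
  have mx1 := (split2 hp hk hmk hu (x := x1)).2
  have dy1 := (split2 hp hk hmk hu (x := y1)).1
  have my1 := (split2 hp hk hmk hu (x := y1)).2
  have dx2 := (split2 hq hl hnl hv (x := x2)).1
  have mx2 := (split2 hq hl hnl hv (x := x2)).2
  have dy2 := (split2 hq hl hnl hv (x := y2)).1
  have my2 := (split2 hq hl hnl hv (x := y2)).2
  simp only [dx1, mx1, dy1, my1, dx2, mx2, dy2, my2, h1, h2]
  rw [show δ.entry ⟨x1 / p, divlt hp hx1⟩ ⟨x2 / q, divlt hq hx2⟩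
      = δ.entry ⟨y1 / p, c2.1⟩ ⟨y2 / q, c2.2⟩ from he]

end Aux

/-- the class of morphic (`h`) array pattern languages is closed
under intersection. -/
theorem stmt8 {σ : Type} [Fintype σ] [Nonempty σ] (α β : Arr ℕ) :
    ∃ γ : Arr ℕ, langOf σ Mode.h γ = langOf σ Mode.h α ∩ langOf σ Mode.h β := by
  classical
  obtain ⟨p, hp⟩ := Nat.dvd_lcm_left α.rows β.rows
  obtain ⟨p', hp'⟩ := Nat.dvd_lcm_right α.rows β.rows
  obtain ⟨q, hq⟩ := Nat.dvd_lcm_left α.cols β.cols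
  obtain ⟨q', hq'⟩ := Nat.dvd_lcm_right α.cols β.cols
  set R := Nat.lcm α.rows β.rows with hRdef
  set C := Nat.lcm α.cols β.cols with hCdef
  have hR0 : 0 < R := Nat.lcm_pos α.rows_pos β.rows_pos
  have hC0 : 0 < C := Nat.lcm_pos α.cols_pos β.cols_pos
  have hp0 : 0 < p := by
    rcases Nat.eq_zero_or_pos p with h0 | h0
    · rw [h0, mul_zero] at hp; omega
    · exact h0
  have hp'0 : 0 < p' := by
    rcases Nat.eq_zero_or_pos p' with h0 | h0
    · rw [h0, mul_zero] at hp'; omega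
    · exact h0
  have hq0 : 0 < q := by
    rcases Nat.eq_zero_or_pos q with h0 | h0
    · rw [h0, mul_zero] at hq; omega
    · exact h0
  have hq'0 : 0 < q' := by
    rcases Nat.eq_zero_or_pos q' with h0 | h0
    · rw [h0, mul_zero] at hq'; omega
    · exact h0
  set rel : (Fin R × Fin C) → (Fin R × Fin C) → Prop := fun x y =>
    bVar α p q x.1 x.2 = bVar α p q y.1 y.2 ∨
      bVar β p' q' x.1 x.2 = bVar β p' q' y.1 y.2 with hreldef
  let sQ : Setoid (Fin R × Fin C) := ⟨Relation.EqvGen rel, Relation.EqvGen.is_equivalence rel⟩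
  obtain ⟨enc, henc⟩ := exists_injective_nat (Quotient sQ)
  set cls : Fin R × Fin C → ℕ := fun x => enc (Quotient.mk sQ x) with hclsdef
  have hcls : ∀ x y, cls x = cls y ↔ Relation.EqvGen rel x y := by
    intro x y
    constructor
    · intro h; exact Quotient.exact (henc h)
    · intro h; exact congrArg enc (Quotient.sound h)
  refine ⟨⟨R, C, hR0, hC0, fun i j => cls (i, j)⟩, ?_⟩
  apply Set.eq_of_subset_of_subset
  · intro W hW
    constructor
    · refine lang_sub α _ p q hp0 hq0 hp hq ?_ hW
      intro i i' j j' hb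
      exact (hcls (i, j) (i', j')).2 (Relation.EqvGen.rel _ _ (Or.inl hb))
    · refine lang_sub β _ p' q' hp'0 hq'0 hp' hq' ?_ hW
      intro i i' j j' hb
      exact (hcls (i, j) (i', j')).2 (Relation.EqvGen.rel _ _ (Or.inr hb))
  · rintro W ⟨hWα, hWβ⟩
    rw [mem_langh_iff] at hWα hWβ
    rw [mem_langh_iff]
    obtain ⟨m, n, hm, hn, f, hfW⟩ := hWα
    obtain ⟨m', n', hm', hn', f', hfW'⟩ := hWβ
    have hWr : W.rows = α.rows * m := by rw [← hfW]; rfl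
    have hWc : W.cols = α.cols * n := by rw [← hfW]; rfl
    have hWr' : W.rows = β.rows * m' := by rw [← hfW']; rfl
    have hWc' : W.cols = β.cols * n' := by rw [← hfW']; rfl
    obtain ⟨k, hk⟩ : R ∣ W.rows := Nat.lcm_dvd ⟨m, hWr⟩ ⟨m', hWr'⟩
    obtain ⟨l, hl⟩ : C ∣ W.cols := Nat.lcm_dvd ⟨n, hWc⟩ ⟨n', hWc'⟩
    have hk0 : 0 < k := by
      rcases Nat.eq_zero_or_pos k with h0 | h0
      · rw [h0, mul_zero] at hk; have := W.rows_pos; omega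
      · exact h0
    have hl0 : 0 < l := by
      rcases Nat.eq_zero_or_pos l with h0 | h0
      · rw [h0, mul_zero] at hl; have := W.cols_pos; omega
      · exact h0
    have hmk : m = p * k := by
      have h : α.rows * m = α.rows * (p * k) := by
        rw [← hWr, hk, hp, mul_assoc]
      exact Nat.eq_of_mul_eq_mul_left α.rows_pos h
    have hnl : n = q * l := by
      have h : α.cols * n = α.cols * (q * l) := by
        rw [← hWc, hl, hq, mul_assoc]
      exact Nat.eq_of_mul_eq_mul_left α.cols_pos h
    have hmk' : m' = p' * k := by
      have h : β.rows * m' = β.rows * (p' * k) := by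
        rw [← hWr', hk, hp', mul_assoc]
      exact Nat.eq_of_mul_eq_mul_left β.rows_pos h
    have hnl' : n' = q' * l := by
      have h : β.cols * n' = β.cols * (q' * l) := by
        rw [← hWc', hl, hq', mul_assoc]
      exact Nat.eq_of_mul_eq_mul_left β.cols_pos h
    have E : ∀ x y : Fin R × Fin C, Relation.EqvGen rel x y →
        ∀ (u v : ℕ), u < k → v < l →
        ∀ (H1 : (x.1 : ℕ) * k + u < W.rows) (H2 : (x.2 : ℕ) * l + v < W.cols)
          (H3 : (y.1 : ℕ) * k + u < W.rows) (H4 : (y.2 : ℕ) * l + v < W.cols),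
        W.entry ⟨(x.1 : ℕ) * k + u, H1⟩ ⟨(x.2 : ℕ) * l + v, H2⟩
          = W.entry ⟨(y.1 : ℕ) * k + u, H3⟩ ⟨(y.2 : ℕ) * l + v, H4⟩ := by
      intro x y hxy
      induction hxy with
      | rel x y h =>
        intro u v hu hv H1 H2 H3 H4
        rcases h with h | h
        · have bx1 : (x.1 : ℕ) < α.rows * p := by rw [← hp]; exact x.1.isLt
          have bx2 : (x.2 : ℕ) < α.cols * q := by rw [← hq]; exact x.2.isLt
          have by1 : (y.1 : ℕ) < α.rows * p := by rw [← hp]; exact y.1.isLt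
          have by2 : (y.2 : ℕ) < α.cols * q := by rw [← hq]; exact y.2.isLt
          exact key2 hm hn f α W hfW hk0 hl0 hp0 hq0 hmk hnl bx1 bx2 by1 by2 h hu hv H1 H2 H3 H4
        · have bx1 : (x.1 : ℕ) < β.rows * p' := by rw [← hp']; exact x.1.isLt
          have bx2 : (x.2 : ℕ) < β.cols * q' := by rw [← hq']; exact x.2.isLt
          have by1 : (y.1 : ℕ) < β.rows * p' := by rw [← hp']; exact y.1.isLt
          have by2 : (y.2 : ℕ) < β.cols * q' := by rw [← hq']; exact y.2.isLt
          exact key2 hm' hn' f' β W hfW' hk0 hl0 hp'0 hq'0 hmk' hnl' bx1 bx2 by1 by2 h hu hv H1 H2 H3 H4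
      | refl x =>
        intro u v hu hv H1 H2 H3 H4
        rfl
      | symm x y _ ih =>
        intro u v hu hv H1 H2 H3 H4
        exact (ih u v hu hv H3 H4 H1 H2).symm
      | trans x y z _ _ ih1 ih2 =>
        intro u v hu hv H1 H2 H3 H4
        have Hm1 : (y.1 : ℕ) * k + u < W.rows := by rw [hk]; exact blklt y.1.isLt hu
        have Hm2 : (y.2 : ℕ) * l + v < W.cols := by rw [hl]; exact blklt y.2.isLt hv
        exact (ih1 u v hu hv H1 H2 Hm1 Hm2).trans (ih2 u v hu hv Hm1 Hm2 H3 H4)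
    refine ⟨k, l, hk0, hl0, fun z u v =>
      if h : ∃ xy : Fin R × Fin C, cls xy = z then
        W.entry ⟨((Classical.choose h).1 : ℕ) * k + (u : ℕ),
            by rw [hk]; exact blklt (Classical.choose h).1.isLt u.isLt⟩
          ⟨((Classical.choose h).2 : ℕ) * l + (v : ℕ),
            by rw [hl]; exact blklt (Classical.choose h).2.isLt v.isLt⟩
      else Classical.arbitrary σ, ?_⟩
    apply arr_ext (show R * k = W.rows from hk.symm) (show C * l = W.cols from hl.symm)
    intro i j hi hj
    erw [asm_entry]
    dsimp only
    have hex : ∃ xy : Fin R × Fin C,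
        cls xy = cls (⟨i / k, divlt hk0 hi⟩, ⟨j / l, divlt hl0 hj⟩) := ⟨_, rfl⟩
    rw [dif_pos hex]
    have hspec := (hcls _ _).1 (Classical.choose_spec hex)
    have hE := E _ _ hspec (i % k) (j % l) (Nat.mod_lt _ hk0) (Nat.mod_lt _ hl0)
      (by rw [hk]; exact blklt (Classical.choose hex).1.isLt (Nat.mod_lt _ hk0))
      (by rw [hl]; exact blklt (Classical.choose hex).2.isLt (Nat.mod_lt _ hl0))
      (by rw [hk]; exact blklt (divlt hk0 hi) (Nat.mod_lt _ hk0))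
      (by rw [hl]; exact blklt (divlt hl0 hj) (Nat.mod_lt _ hl0))
    rw [hE]
    congr 1 <;> exact Fin.ext (by simp [Nat.div_add_mod'])
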